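/- Let m ≥ 2 and K ≥ 1, let (Ω, F, P) be a probability space, and let X_0, …, X_{K−1} : Ω → Fin m be independent random variables, each distributed according to a probability vector p : Fin m → ℝ with 0 < p_i < 1 for all i. Define the (random) empirical type T : Fin m → ℝ by T_i = (#{k : X_k = i})/K, and let L = max_{i} (−ln p_i)/p_i. Then for every t > 0, P( | −H_s(T) − KL(T‖p) + H_s(p) | ≥ t ) ≤ 2 exp(−2 K t² / L²), where H_s(·) denotes Shannon entropy and KL(T‖p) = Σ_i T_i ln(T_i/p_i), with the conventions 0 · ln 0 = 0 and 0 · ln(0/p_i) = 0. -/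

import Mathlib

open MeasureTheory ProbabilityTheory

/-- Convexity bound: for `|y| ≤ c`, `exp (s*y) ≤ cosh (s*c) + (y/c) * sinh (s*c)`. -/
lemma aux_exp_le_cosh_add (y c s : ℝ) (hc : 0 < c) (hy : |y| ≤ c) :
    Real.exp (s * y) ≤ Real.cosh (s * c) + (y / c) * Real.sinh (s * c) := by
  obtain ⟨hy1, hy2⟩ := abs_le.mp hy
  set a : ℝ := (c + y) / (2 * c) with ha_def
  set b : ℝ := (c - y) / (2 * c) with hb_def
  have ha : 0 ≤ a := div_nonneg (by linarith) (by linarith)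
  have hb : 0 ≤ b := div_nonneg (by linarith) (by linarith)
  have hab : a + b = 1 := by
    rw [ha_def, hb_def, ← add_div, div_eq_one_iff_eq (mul_pos two_pos hc).ne']
    ring
  have key := convexOn_exp.2 (Set.mem_univ (s * c)) (Set.mem_univ (-(s * c))) ha hb hab
  have harg : a • (s * c) + b • (-(s * c)) = s * y := by
    simp only [smul_eq_mul, ha_def, hb_def]
    field_simp
    ring
  rw [harg] at key
  refine key.trans (le_of_eq ?_)
  simp only [smul_eq_mul, Real.cosh_eq, Real.sinh_eq, ha_def, hb_def]
  field_simp
  ring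

lemma aux_exp_le_cosh_add' (y c s : ℝ) (hc : 0 < c) (hy : |y| ≤ c) :
    Real.exp (s * y) ≤ Real.cosh (s * c) + (y / c) * Real.sinh (s * c) :=
  aux_exp_le_cosh_add y c s hc hy

/-- Weighted Hoeffding-type mgf bound with constant `c²/2`. -/
lemma aux_weighted_mgf (m : ℕ) (p g : Fin m → ℝ) (hp : ∀ i, 0 ≤ p i)
    (hsum : ∑ i, p i = 1) (c s : ℝ) (hc : 0 < c) (hbd : ∀ i, |g i| ≤ c)
    (hmean : ∑ i, p i * g i = 0) :
    ∑ i, p i * Real.exp (s * g i) ≤ Real.exp (s ^ 2 * c ^ 2 / 2) := by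
  have h1 : ∑ i, p i * Real.exp (s * g i)
      ≤ ∑ i, p i * (Real.cosh (s * c) + (g i / c) * Real.sinh (s * c)) := by
    refine Finset.sum_le_sum fun i _ => ?_
    exact mul_le_mul_of_nonneg_left (aux_exp_le_cosh_add (g i) c s hc (hbd i)) (hp i)
  have h2 : ∑ i, p i * (Real.cosh (s * c) + (g i / c) * Real.sinh (s * c))
      = Real.cosh (s * c) := by
    have : ∀ i, p i * (Real.cosh (s * c) + (g i / c) * Real.sinh (s * c))
        = p i * Real.cosh (s * c) + (p i * g i) * (Real.sinh (s * c) / c) := by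
      intro i; ring
    simp_rw [this, Finset.sum_add_distrib, ← Finset.sum_mul, hsum, hmean, one_mul,
      zero_mul, add_zero]
  have h3 : Real.cosh (s * c) ≤ Real.exp ((s * c) ^ 2 / 2) := Real.cosh_le_exp_half_sq _
  calc ∑ i, p i * Real.exp (s * g i) ≤ Real.cosh (s * c) := h1.trans (le_of_eq h2)
    _ ≤ Real.exp ((s * c) ^ 2 / 2) := h3
    _ = Real.exp (s ^ 2 * c ^ 2 / 2) := by ring_nf

/-- Integral of a function of a `Fin m`-valued random variable with law `p`. -/
lemma aux_integral_comp {Ω : Type*} [MeasurableSpace Ω] (P : Measure Ω)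
    [IsProbabilityMeasure P] {m : ℕ} (Z : Ω → Fin m) (hZ : Measurable Z)
    (p : Fin m → ℝ) (hp : ∀ i, 0 ≤ p i)
    (hlaw : ∀ i, P {ω | Z ω = i} = ENNReal.ofReal (p i)) (h : Fin m → ℝ) :
    ∫ ω, h (Z ω) ∂P = ∑ i, p i * h i := by
  have hfun : (fun ω => h (Z ω))
      = fun ω => ∑ i, Set.indicator (Z ⁻¹' {i}) (fun _ => h i) ω := by
    funext ω
    simp only [Set.indicator, Set.mem_preimage, Set.mem_singleton_iff]
    rw [Finset.sum_ite_eq]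
    simp
  rw [hfun, integral_finset_sum _ (fun i _ =>
    (integrable_const (h i)).indicator (hZ (measurableSet_singleton i)))]
  refine Finset.sum_congr rfl fun i _ => ?_
  rw [integral_indicator_const (h i) (hZ (measurableSet_singleton i))]
  have : Z ⁻¹' {i} = {ω | Z ω = i} := rfl
  rw [this, measureReal_def, hlaw i, ENNReal.toReal_ofReal (hp i), smul_eq_mul, mul_comm]

/-- Functions of a `Fin m`-valued random variable are integrable. -/
lemma aux_integrable_comp {Ω : Type*} [MeasurableSpace Ω] (P : Measure Ω)
    [IsProbabilityMeasure P] {m : ℕ} (Z : Ω → Fin m) (hZ : Measurable Z)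
    (h : Fin m → ℝ) : Integrable (fun ω => h (Z ω)) P := by
  have hfun : (fun ω => h (Z ω))
      = fun ω => ∑ i, Set.indicator (Z ⁻¹' {i}) (fun _ => h i) ω := by
    funext ω
    simp only [Set.indicator, Set.mem_preimage, Set.mem_singleton_iff]
    rw [Finset.sum_ite_eq]
    simp
  rw [hfun]
  exact integrable_finset_sum _ fun i _ =>
    (integrable_const (h i)).indicator (hZ (measurableSet_singleton i))

/-- Counting identity: sum over trials equals count-weighted sum over labels. -/
lemma aux_count_sum {K m : ℕ} (x : Fin K → Fin m) (f : Fin m → ℝ) :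
    ∑ k, f (x k) = ∑ i, ((Finset.univ.filter fun k => x k = i).card : ℝ) * f i := by
  have h1 : ∀ k, f (x k) = ∑ i, if x k = i then f i else 0 := by
    intro k
    rw [Finset.sum_ite_eq]
    simp
  simp_rw [h1]
  rw [Finset.sum_comm]
  refine Finset.sum_congr rfl fun i _ => ?_
  rw [← Finset.sum_filter, Finset.sum_const, nsmul_eq_mul]

/-- One-sided Chernoff bound for a sum of iid bounded, centered functions of labels. -/
lemma aux_one_sided {Ω : Type*} [MeasurableSpace Ω] (P : Measure Ω)
    [IsProbabilityMeasure P] {m K : ℕ} (X : Fin K → Ω → Fin m)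
    (hX_meas : ∀ k, Measurable (X k))
    (hX_indep : iIndepFun X P)
    (p : Fin m → ℝ) (hp : ∀ i, 0 ≤ p i) (hsum : ∑ i, p i = 1)
    (hX_law : ∀ k i, P {ω | X k ω = i} = ENNReal.ofReal (p i))
    (g : Fin m → ℝ) (c : ℝ) (hc : 0 < c) (hbd : ∀ i, |g i| ≤ c)
    (hmean : ∑ i, p i * g i = 0) (t : ℝ) (ht : 0 < t) :
    P {ω | (K : ℝ) * t ≤ ∑ k, g (X k ω)}
      ≤ ENNReal.ofReal (Real.exp (-((K : ℝ) * t ^ 2) / (2 * c ^ 2))) := by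
  set s : ℝ := t / c ^ 2 with hs_def
  have hs_pos : 0 < s := div_pos ht (by positivity)
  set Y : Fin K → Ω → ℝ := fun k ω => g (X k ω) with hY_def
  have hY_meas : ∀ k, Measurable (Y k) := fun k =>
    (measurable_from_top (f := g)).comp (hX_meas k)
  have hY_indep : iIndepFun Y P :=
    hX_indep.comp (fun _ => g) (fun _ => measurable_from_top)
  have hY_int : ∀ k, Integrable (fun ω => Real.exp (s * Y k ω)) P := fun k =>
    aux_integrable_comp P (X k) (hX_meas k) (fun i => Real.exp (s * g i))
  have h_int_sum : Integrable (fun ω => Real.exp (s * (∑ k, Y k) ω)) P :=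
    hY_indep.integrable_exp_mul_sum hY_meas (fun k _ => hY_int k)
  have hch := measure_ge_le_exp_mul_mgf (μ := P) (X := ∑ k, Y k) ((K : ℝ) * t)
    hs_pos.le h_int_sum
  have hmgf_each : ∀ k : Fin K, mgf (Y k) P s ≤ Real.exp (s ^ 2 * c ^ 2 / 2) := by
    intro k
    have : mgf (Y k) P s = ∑ i, p i * Real.exp (s * g i) := by
      unfold mgf
      exact aux_integral_comp P (X k) (hX_meas k) p hp (hX_law k)
        (fun i => Real.exp (s * g i))
    rw [this]
    exact aux_weighted_mgf m p g hp hsum c s hc hbd hmean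
  have hmgf_sum : mgf (∑ k, Y k) P s ≤ Real.exp ((K : ℝ) * (s ^ 2 * c ^ 2 / 2)) := by
    rw [hY_indep.mgf_sum hY_meas]
    calc ∏ k : Fin K, mgf (Y k) P s ≤ ∏ _k : Fin K, Real.exp (s ^ 2 * c ^ 2 / 2) :=
          Finset.prod_le_prod (fun k _ => mgf_nonneg) (fun k _ => hmgf_each k)
      _ = Real.exp (s ^ 2 * c ^ 2 / 2) ^ K := by
          rw [Finset.prod_const, Finset.card_univ, Fintype.card_fin]
      _ = Real.exp ((K : ℝ) * (s ^ 2 * c ^ 2 / 2)) := by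
          rw [← Real.exp_nat_mul]
  have hbound : (P {ω | (K : ℝ) * t ≤ (∑ k, Y k) ω}).toReal
      ≤ Real.exp (-((K : ℝ) * t ^ 2) / (2 * c ^ 2)) := by
    refine hch.trans ?_
    calc Real.exp (-s * ((K : ℝ) * t)) * mgf (∑ k, Y k) P s
        ≤ Real.exp (-s * ((K : ℝ) * t)) * Real.exp ((K : ℝ) * (s ^ 2 * c ^ 2 / 2)) := by
          exact mul_le_mul_of_nonneg_left hmgf_sum (Real.exp_nonneg _)
      _ = Real.exp (-s * ((K : ℝ) * t) + (K : ℝ) * (s ^ 2 * c ^ 2 / 2)) := by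
          rw [← Real.exp_add]
      _ = Real.exp (-((K : ℝ) * t ^ 2) / (2 * c ^ 2)) := by
          congr 1
          rw [hs_def]
          field_simp
          ring
  have hset : {ω | (K : ℝ) * t ≤ ∑ k, g (X k ω)} = {ω | (K : ℝ) * t ≤ (∑ k, Y k) ω} := by
    ext ω
    simp [hY_def, Finset.sum_apply]
  rw [hset]
  have h1 : P {ω | (K : ℝ) * t ≤ (∑ k, Y k) ω} ≠ ⊤ := measure_ne_top _ _
  rw [← ENNReal.ofReal_toReal h1]
  exact ENNReal.ofReal_le_ofReal hbound

/-- Theorem 8 of the paper: for i.i.d. labels `X k` on `Fin m` with distribution `p`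
(`0 < p i < 1`), the normalized log-probability `-H_s(T) - KL(T ‖ p)` of the realized
sequence (expressed through its random empirical type `T`) concentrates around
`-H_s(p)` with a Hoeffding-type bound `2 exp (-2 K t² / L²)`, where
`L = max_i (-ln p i) / p i`. -/
theorem stmt9 (m K : ℕ) (hm : 2 ≤ m) (hK : 1 ≤ K)
    (Ω : Type*) [MeasurableSpace Ω] (P : Measure Ω) [IsProbabilityMeasure P]
    (X : Fin K → Ω → Fin m) (hX_meas : ∀ k, Measurable (X k))
    (hX_indep : iIndepFun X P)
    (p : Fin m → ℝ) (hp_pos : ∀ i, 0 < p i) (hp_lt : ∀ i, p i < 1)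
    (hp_sum : ∑ i, p i = 1)
    (hX_law : ∀ k i, P {ω | X k ω = i} = ENNReal.ofReal (p i))
    (T : Ω → Fin m → ℝ)
    (hT : ∀ ω i, T ω i = ((Finset.univ.filter fun k => X k ω = i).card : ℝ) / K)
    (L : ℝ) (hL : L = ⨆ i, (-Real.log (p i)) / p i) :
    ∀ t : ℝ, 0 < t →
      P {ω | t ≤ |(-(-∑ i, T ω i * Real.log (T ω i)))
            - (∑ i, T ω i * Real.log (T ω i / p i))
            + (-∑ i, p i * Real.log (p i))|}
        ≤ ENNReal.ofReal (2 * Real.exp (-(2 * K * t ^ 2) / L ^ 2)) := by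
  intro t ht
  have hm0 : 0 < m := by omega
  have hK0 : (0 : ℝ) < K := by exact_mod_cast hK
  set f : Fin m → ℝ := fun i => Real.log (p i) with hf_def
  set μR : ℝ := ∑ i, p i * f i with hμ_def
  -- minimizer of p
  obtain ⟨i₀, -, hmin⟩ := Finset.exists_min_image Finset.univ p
    ⟨⟨0, hm0⟩, Finset.mem_univ _⟩
  have hmin' : ∀ j, p i₀ ≤ p j := fun j => hmin j (Finset.mem_univ j)
  set c : ℝ := -Real.log (p i₀) with hc_def
  have hc : 0 < c := by
    rw [hc_def, neg_pos]
    exact Real.log_neg (hp_pos i₀) (hp_lt i₀)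
  -- bounds on f
  have hf_le : ∀ i, f i ≤ 0 := fun i => (Real.log_neg (hp_pos i) (hp_lt i)).le
  have hf_ge : ∀ i, -c ≤ f i := by
    intro i
    rw [hc_def, neg_neg]
    exact Real.log_le_log (hp_pos i₀) (hmin' i)
  have hμ_le : μR ≤ 0 := by
    rw [hμ_def]
    apply Finset.sum_nonpos
    intro i _
    exact mul_nonpos_of_nonneg_of_nonpos (hp_pos i).le (hf_le i)
  have hμ_ge : -c ≤ μR := by
    have : ∑ i, p i * (-c) ≤ μR :=
      Finset.sum_le_sum fun i _ => mul_le_mul_of_nonneg_left (hf_ge i) (hp_pos i).le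
    calc -c = ∑ i, p i * (-c) := by rw [← Finset.sum_mul, hp_sum, one_mul]
      _ ≤ μR := this
  set g : Fin m → ℝ := fun i => f i - μR with hg_def
  have hg_bd : ∀ i, |g i| ≤ c := by
    intro i
    rw [abs_le, hg_def]
    constructor <;> simp only <;> [linarith [hf_ge i, hμ_le]; linarith [hf_le i, hμ_ge]]
  have hg_mean : ∑ i, p i * g i = 0 := by
    simp only [hg_def, mul_sub]
    rw [Finset.sum_sub_distrib, ← Finset.sum_mul, hp_sum, one_mul, ← hμ_def, sub_self]
  have hgneg_bd : ∀ i, |(-g ·) i| ≤ c := by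
    intro i; rw [abs_neg]; exact hg_bd i
  have hgneg_mean : ∑ i, p i * (-g ·) i = 0 := by
    simp only [mul_neg]
    rw [Finset.sum_neg_distrib, hg_mean, neg_zero]
  -- the expression equals (∑ k, g (X k ω)) / K
  have key : ∀ ω, (-(-∑ i, T ω i * Real.log (T ω i)))
      - (∑ i, T ω i * Real.log (T ω i / p i))
      + (-∑ i, p i * Real.log (p i)) = (∑ k, g (X k ω)) / K := by
    intro ω
    have h1 : ∀ i, T ω i * Real.log (T ω i) - T ω i * Real.log (T ω i / p i)
        = T ω i * f i := by
      intro i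
      by_cases hTi : T ω i = 0
      · simp [hTi]
      · rw [Real.log_div hTi (hp_pos i).ne']
        ring
    have h2 : (-(-∑ i, T ω i * Real.log (T ω i)))
        - (∑ i, T ω i * Real.log (T ω i / p i))
        = ∑ i, T ω i * f i := by
      rw [neg_neg, ← Finset.sum_sub_distrib]
      exact Finset.sum_congr rfl fun i _ => h1 i
    have h3 : ∑ i, T ω i * f i = (∑ k, f (X k ω)) / K := by
      rw [aux_count_sum (fun k => X k ω) f, Finset.sum_div]
      refine Finset.sum_congr rfl fun i _ => ?_
      rw [hT ω i]
      ring
    rw [h2, h3]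
    have h4 : ∑ k, g (X k ω) = (∑ k, f (X k ω)) - K * μR := by
      simp only [hg_def]
      rw [Finset.sum_sub_distrib, Finset.sum_const, Finset.card_univ, Fintype.card_fin,
        nsmul_eq_mul]
    rw [h4, hμ_def, hf_def]
    field_simp
    ring
  -- event inclusion
  have hsub : {ω | t ≤ |(-(-∑ i, T ω i * Real.log (T ω i)))
        - (∑ i, T ω i * Real.log (T ω i / p i))
        + (-∑ i, p i * Real.log (p i))|}
      ⊆ {ω | (K : ℝ) * t ≤ ∑ k, g (X k ω)}
        ∪ {ω | (K : ℝ) * t ≤ ∑ k, (-g ·) (X k ω)} := by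
    intro ω hω
    simp only [Set.mem_setOf_eq] at hω
    rw [key ω, abs_div, abs_of_pos hK0] at hω
    have habs : (K : ℝ) * t ≤ |∑ k, g (X k ω)| := by
      rw [mul_comm]
      exact (le_div_iff₀ hK0).mp hω
    rcases abs_cases (∑ k, g (X k ω)) with ⟨heq, -⟩ | ⟨heq, -⟩
    · left
      simp only [Set.mem_setOf_eq]
      rw [heq] at habs
      exact habs
    · right
      simp only [Set.mem_setOf_eq]
      have : ∑ k, (-g ·) (X k ω) = -∑ k, g (X k ω) := by
        simp [Finset.sum_neg_distrib]
      rw [this, ← heq]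
      exact habs
  -- one-sided bounds
  have hp_nn : ∀ i, 0 ≤ p i := fun i => (hp_pos i).le
  have hbd1 := aux_one_sided P X hX_meas hX_indep p hp_nn hp_sum hX_law g c hc
    hg_bd hg_mean t ht
  have hbd2 := aux_one_sided P X hX_meas hX_indep p hp_nn hp_sum hX_law (-g ·) c hc
    hgneg_bd hgneg_mean t ht
  -- L ≥ 2c
  have hpi₀_le : p i₀ ≤ 1 / 2 := by
    have h2m : (m : ℝ) * p i₀ ≤ 1 := by
      have := Finset.card_nsmul_le_sum Finset.univ p (p i₀) (fun j _ => hmin' j)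
      rwa [hp_sum, Finset.card_univ, Fintype.card_fin, nsmul_eq_mul] at this
    have hm2 : (2 : ℝ) ≤ m := by exact_mod_cast hm
    nlinarith [hp_pos i₀]
  have hL_ge : 2 * c ≤ L := by
    have h1 : c / p i₀ ≤ L := by
      rw [hL, hc_def]
      exact le_ciSup (Set.Finite.bddAbove
        (Set.finite_range fun i => -Real.log (p i) / p i)) i₀
    have h2 : 2 * c ≤ c / p i₀ := by
      have := div_le_div_of_nonneg_left hc.le (hp_pos i₀) hpi₀_le
      calc 2 * c = c / (1 / 2) := by ring
        _ ≤ c / p i₀ := this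
    linarith
  have hL_pos : 0 < L := by linarith
  -- exponent comparison
  have hexp_le : Real.exp (-((K : ℝ) * t ^ 2) / (2 * c ^ 2))
      ≤ Real.exp (-(2 * K * t ^ 2) / L ^ 2) := by
    apply Real.exp_le_exp.mpr
    have h4c : 4 * c ^ 2 ≤ L ^ 2 := by nlinarith
    have h1 : (2 * (K : ℝ) * t ^ 2) / L ^ 2 ≤ (2 * (K : ℝ) * t ^ 2) / (4 * c ^ 2) :=
      div_le_div_of_nonneg_left (by positivity) (by positivity) h4c
    have h2 : (2 * (K : ℝ) * t ^ 2) / (4 * c ^ 2) = ((K : ℝ) * t ^ 2) / (2 * c ^ 2) := by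
      ring
    rw [neg_div, neg_div]
    linarith [h1.trans_eq h2]
  calc P {ω | t ≤ |(-(-∑ i, T ω i * Real.log (T ω i)))
        - (∑ i, T ω i * Real.log (T ω i / p i))
        + (-∑ i, p i * Real.log (p i))|}
      ≤ P ({ω | (K : ℝ) * t ≤ ∑ k, g (X k ω)}
          ∪ {ω | (K : ℝ) * t ≤ ∑ k, (-g ·) (X k ω)}) := measure_mono hsub
    _ ≤ P {ω | (K : ℝ) * t ≤ ∑ k, g (X k ω)}
        + P {ω | (K : ℝ) * t ≤ ∑ k, (-g ·) (X k ω)} := measure_union_le _ _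
    _ ≤ ENNReal.ofReal (Real.exp (-((K : ℝ) * t ^ 2) / (2 * c ^ 2)))
        + ENNReal.ofReal (Real.exp (-((K : ℝ) * t ^ 2) / (2 * c ^ 2))) :=
          add_le_add hbd1 hbd2
    _ = ENNReal.ofReal (2 * Real.exp (-((K : ℝ) * t ^ 2) / (2 * c ^ 2))) := by
          rw [← ENNReal.ofReal_add (Real.exp_nonneg _) (Real.exp_nonneg _)]
          ring_nf
    _ ≤ ENNReal.ofReal (2 * Real.exp (-(2 * K * t ^ 2) / L ^ 2)) := by
          apply ENNReal.ofReal_le_ofReal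
          linarith [hexp_le]
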